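/- Let φ : Δ^{0̂} → Δ be a group epimorphism. If H ≤ Δ contains a conjugate of R₀, R₁ or R₂, then H φ⁻¹ contains a conjugate in Δ^{0̂} of one of R₁, R₂, R₁^{R₀}, R₂^{R₀}. (If the hypermap φ(H) has no boundary, then H has no boundary.) -/

import Mathlib

/-- The relations making each generator an involution. -/
def rels : Set (FreeGroup (Fin 3)) := {x | ∃ i, x = (FreeGroup.of i) ^ 2}

/-- Δ = C₂ * C₂ * C₂. -/
abbrev Δ := PresentedGroup rels

/-- The generators R₀, R₁, R₂ of Δ. -/
def R (i : Fin 3) : Δ := PresentedGroup.of i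

/-- Δ^{0̂}, the normal closure of {R₁, R₂}, an index-2 subgroup of Δ. -/
def Δ0 : Subgroup Δ := Subgroup.normalClosure {R 1, R 2}

/-- Δ⁺, the even-word subgroup of Δ. -/
def Δplus : Subgroup Δ := Subgroup.closure {R 1 * R 2, R 2 * R 0, R 0 * R 1}

/-- The preimage H φ⁻¹, regarded as a subgroup of Δ. -/
def preim (φ : Δ0 →* Δ) (H : Subgroup Δ) : Subgroup Δ :=
  (H.comap φ).map Δ0.subtype

/-- The kernel of φ, regarded as a subgroup of Δ. -/
def kerS (φ : Δ0 →* Δ) : Subgroup Δ := φ.ker.map Δ0.subtype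

/-- The conjugate K^g = g⁻¹ K g. -/
def conjS (K : Subgroup Δ) (g : Δ) : Subgroup Δ :=
  K.map (MulAut.conj g⁻¹).toMonoidHom

/-- The four involutions R₁, R₂, R₁^{R₀}, R₂^{R₀} generating Δ^{0̂}. -/
def gens : Set Δ := {R 1, R 2, (R 0)⁻¹ * R 1 * R 0, (R 0)⁻¹ * R 2 * R 0}

lemma Rsq (i : Fin 3) : R i * R i = 1 := by
  have : ((FreeGroup.of i) ^ 2 : FreeGroup (Fin 3)) ∈ Subgroup.normalClosure rels :=
    Subgroup.subset_normalClosure ⟨i, rfl⟩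
  have h2 : (PresentedGroup.mk rels) ((FreeGroup.of i) ^ 2) = 1 :=
    (QuotientGroup.eq_one_iff _).2 this
  rw [map_pow, sq] at h2
  exact h2

@[simp] lemma Rinv (i : Fin 3) : (R i)⁻¹ = R i :=
  inv_eq_of_mul_eq_one_right (Rsq i)

@[simp] lemma Rcancel (i : Fin 3) (x : Δ) : R i * (R i * x) = x := by
  rw [← mul_assoc, Rsq, one_mul]

abbrev Red (l : List (Fin 3)) : Prop := l.Chain' (· ≠ ·)

def w (l : List (Fin 3)) : Δ := (l.map R).prod

lemma w_append (l₁ l₂ : List (Fin 3)) : w (l₁ ++ l₂) = w l₁ * w l₂ := by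
  simp [w]

@[simp] lemma w_nil : w [] = 1 := rfl
lemma w_cons (a : Fin 3) (l : List (Fin 3)) : w (a :: l) = R a * w l := by
  simp [w]

def step (a : Fin 3) : List (Fin 3) → List (Fin 3)
  | [] => [a]
  | b :: t => if a = b then t else a :: b :: t

lemma step_red {a : Fin 3} {l : List (Fin 3)} (h : Red l) : Red (step a l) := by
  cases l with
  | nil => exact List.isChain_singleton a
  | cons b t =>
      by_cases hab : a = b
      · simp only [step, if_pos hab]; exact h.tail
      · simp only [step, if_neg hab]
        exact List.isChain_cons_cons.2 ⟨hab, h⟩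

lemma w_step (a : Fin 3) (l : List (Fin 3)) : R a * w l = w (step a l) := by
  cases l with
  | nil => simp [step, w_cons]
  | cons b t =>
      by_cases hab : a = b
      · subst hab; simp [step, w_cons]
      · simp [step, hab, w_cons]

lemma step_invol {a : Fin 3} {l : List (Fin 3)} (h : Red l) : step a (step a l) = l := by
  cases l with
  | nil => simp [step]
  | cons b t =>
      by_cases hab : a = b
      · subst hab
        simp only [step, if_pos rfl]
        cases t with
        | nil => simp [step]
        | cons c t' =>
            have : a ≠ c := (List.isChain_cons_cons.1 h).1
            simp [step, this]
      · simp [step, hab]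

def L : Type := {l : List (Fin 3) // Red l}

def sigma (a : Fin 3) : Equiv.Perm L :=
  { toFun := fun l => ⟨step a l.1, step_red l.2⟩
    invFun := fun l => ⟨step a l.1, step_red l.2⟩
    left_inv := fun l => Subtype.ext (step_invol l.2)
    right_inv := fun l => Subtype.ext (step_invol l.2) }

def ρ : Δ →* Equiv.Perm L :=
  PresentedGroup.toGroup (f := sigma) (by
    rintro r ⟨k, rfl⟩
    rw [map_pow, FreeGroup.lift_apply_of, sq]
    ext l
    rw [Equiv.Perm.mul_apply, Equiv.Perm.one_apply]
    exact Subtype.ext (step_invol l.2))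

lemma rho_R (a : Fin 3) : ρ (R a) = sigma a := PresentedGroup.toGroup.of _

lemma rho_w {l : List (Fin 3)} (h : Red l) :
    ρ (w l) ⟨[], List.isChain_nil⟩ = ⟨l, h⟩ := by
  induction l with
  | nil => simp only [w, List.map_nil, List.prod_nil, map_one]; rfl
  | cons a t ih =>
      rw [w_cons, map_mul]; erw [Equiv.Perm.mul_apply]; rw [ih h.tail, rho_R]
      apply Subtype.ext
      show step a t = a :: t
      cases t with
      | nil => rfl
      | cons b t' =>
          have : a ≠ b := (List.isChain_cons_cons.1 h).1
          simp [step, this]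

lemma w_eq_one {l : List (Fin 3)} (h : Red l) (hw : w l = 1) : l = [] := by
  have := rho_w h
  rw [hw, map_one] at this
  exact (congrArg Subtype.val this).symm

lemma w_reverse (l : List (Fin 3)) : (w l)⁻¹ = w l.reverse := by
  induction l with
  | nil => simp
  | cons a t ih =>
      rw [List.reverse_cons, w_append]
      show (w (a :: t))⁻¹ = _
      rw [w_cons, mul_inv_rev, Rinv, ih]
      simp [w]

lemma exists_red (g : Δ) : ∃ l, Red l ∧ g = w l := by
  have mulw : ∀ (l₁ l₂ : List (Fin 3)), Red l₂ →
      ∃ l₃, Red l₃ ∧ (l₁.map R).prod * w l₂ = w l₃ := by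
    intro l₁
    induction l₁ with
    | nil => intro l₂ h; exact ⟨l₂, h, by simp⟩
    | cons a t ih =>
        intro l₂ h
        obtain ⟨l₃, h₃, e₃⟩ := ih l₂ h
        refine ⟨step a l₃, step_red h₃, ?_⟩
        rw [List.map_cons, List.prod_cons, mul_assoc, e₃, w_step]
  let S : Subgroup Δ :=
    { carrier := {g | ∃ l, Red l ∧ g = w l}
      one_mem' := ⟨[], List.isChain_nil, rfl⟩
      mul_mem' := by
        rintro x y ⟨l₁, h₁, rfl⟩ ⟨l₂, h₂, rfl⟩
        exact mulw l₁ l₂ h₂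
      inv_mem' := by
        rintro x ⟨l, h, rfl⟩
        exact ⟨l.reverse, List.isChain_reverse.2 (h.imp fun a b hab => Ne.symm hab), (w_reverse l).symm ▸ (w_reverse l) ▸ rfl⟩ }
  exact PresentedGroup.generated_by rels S (fun j => ⟨[j], List.isChain_singleton j, by simp [w_cons, R]⟩) g

lemma classify_aux : ∀ (n : ℕ) (l : List (Fin 3)), l.length ≤ n → Red l → w l * w l = 1 →
    w l = 1 ∨ ∃ (k : Fin 3) (g : Δ), w l = g⁻¹ * R k * g := by
  intro n
  induction n with
  | zero =>
      intro l hlen _ _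
      rw [List.length_eq_zero_iff.1 (Nat.le_zero.1 hlen)]
      exact Or.inl rfl
  | succ n ih =>
      intro l hlen hred hsq
      match l with
      | [] => exact Or.inl rfl
      | [a] => exact Or.inr ⟨a, 1, by simp [w_cons]⟩
      | a :: b :: t =>
          set m : List (Fin 3) := b :: t with hm
          have hmne : m ≠ [] := by simp [hm]
          by_cases hlast : m.getLast hmne = a
          · -- l = a :: core ++ [a]
            have hdec : m = m.dropLast ++ [a] := by
              conv_lhs => rw [← List.dropLast_append_getLast hmne]
              rw [hlast]
            set core := m.dropLast with hcore
            have hredm : Red m := hred.tail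
            have hredcore : Red core := hredm.prefix (List.dropLast_prefix m)
            have wl_eq : w (a :: b :: t) = R a * (w core * R a) := by
              show w (a :: m) = _
              rw [w_cons]
              conv_lhs => rw [hdec]
              rw [w_append, w_cons, w_nil, mul_one]
            have h2 : w core * w core = 1 := by
              have h1 := hsq
              rw [show w (a :: m) = w (a :: b :: t) from rfl, wl_eq] at h1
              rw [show (R a * (w core * R a)) * (R a * (w core * R a))
                  = R a * ((w core * w core) * R a) by simp [mul_assoc]] at h1
              have h3 := congrArg (fun x => R a * x) h1
              simp only [Rcancel, mul_one] at h3
              have h4 := congrArg (fun x => x * R a) h3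
              simpa [mul_assoc, Rsq] using h4
            have hlen2 : core.length ≤ n := by
              have h5 : m.length ≤ n := by simpa using hlen
              have h6 : core.length < m.length := by
                rw [hcore, List.length_dropLast]
                simp [hm]
              omega
            rcases ih core hlen2 hredcore h2 with h | ⟨k, g, hg⟩
            · left
              rw [show w (a :: m) = w (a :: b :: t) from rfl, wl_eq, h, one_mul, Rsq]
            · right
              refine ⟨k, g * R a, ?_⟩
              rw [show w (a :: m) = w (a :: b :: t) from rfl, wl_eq, hg]
              simp [mul_assoc, mul_inv_rev]
          · -- doubled word is reduced and nonempty
            exfalso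
            have hgl : (a :: b :: t).getLast? = some (m.getLast hmne) := by
              rw [List.getLast?_eq_getLast (l := a :: b :: t) (by simp), List.getLast_cons hmne]
            have hred2 : Red ((a :: b :: t) ++ (a :: b :: t)) := by
              apply List.isChain_append.mpr
              refine ⟨hred, hred, ?_⟩
              intro x hx y hy
              simp only [List.head?_cons, Option.mem_def, Option.some.injEq] at hy
              rw [hgl] at hx
              simp only [Option.mem_def, Option.some.injEq] at hx
              subst hy
              rw [← hx]
              exact hlast
            have : ((a :: b :: t) ++ (a :: b :: t)) = [] := by
              apply w_eq_one hred2
              rw [w_append]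
              exact hsq
            simp at this

lemma classify (x : Δ) (hx : x * x = 1) :
    x = 1 ∨ ∃ (k : Fin 3) (g : Δ), x = g⁻¹ * R k * g := by
  obtain ⟨l, hred, rfl⟩ := exists_red x
  exact classify_aux l.length l le_rfl hred hx

def chi (i : Fin 3) : Δ →* Multiplicative (ZMod 2) :=
  PresentedGroup.toGroup (f := fun k => Multiplicative.ofAdd (if k = i then 1 else 0)) (by
    rintro r ⟨k, rfl⟩
    rw [map_pow, FreeGroup.lift_apply_of, sq, ← ofAdd_add]
    have h : ∀ v : ZMod 2, v + v = 0 := by decide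
    rw [h, ofAdd_zero])

lemma chi_R (i k : Fin 3) : chi i (R k) = Multiplicative.ofAdd (if k = i then 1 else 0) :=
  PresentedGroup.toGroup.of _

lemma chi_conj (i : Fin 3) (g x : Δ) : chi i (g⁻¹ * x * g) = chi i x := by
  have h1 : ∀ p q : Multiplicative (ZMod 2), p⁻¹ * q * p = q := by decide
  rw [map_mul, map_mul, map_inv, h1]

lemma mem_gens_iff (s : Δ) : s ∈ gens ↔ s = R 1 ∨ s = R 2 ∨
    s = (R 0)⁻¹ * R 1 * R 0 ∨ s = (R 0)⁻¹ * R 2 * R 0 := by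
  simp [gens, Set.mem_insert_iff]

lemma gens_sub (s : Δ) (hs : s ∈ gens) : s ∈ Δ0 := by
  haveI : Δ0.Normal := Subgroup.normalClosure_normal
  have h1 : R 1 ∈ Δ0 := Subgroup.subset_normalClosure (by simp)
  have h2 : R 2 ∈ Δ0 := Subgroup.subset_normalClosure (by simp)
  rcases (mem_gens_iff s).1 hs with rfl | rfl | rfl | rfl
  · exact h1
  · exact h2
  · exact (inv_inv (R 0)) ▸ this.conj_mem _ h1 (R 0)⁻¹
  · exact (inv_inv (R 0)) ▸ this.conj_mem _ h2 (R 0)⁻¹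

lemma gens_sq (s : Δ) (hs : s ∈ gens) : s * s = 1 := by
  rcases (mem_gens_iff s).1 hs with rfl | rfl | rfl | rfl <;> simp [mul_assoc, Rsq]

lemma conj_gens (k : Fin 3) : ∀ x ∈ Subgroup.closure gens,
    R k * x * R k ∈ Subgroup.closure gens := by
  set C := Subgroup.closure gens with hC
  have g1 : R 1 ∈ C := Subgroup.subset_closure (by simp [gens])
  have g2 : R 2 ∈ C := Subgroup.subset_closure (by simp [gens])
  have g3 : (R 0)⁻¹ * R 1 * R 0 ∈ C := Subgroup.subset_closure (by simp [gens])
  have g4 : (R 0)⁻¹ * R 2 * R 0 ∈ C := Subgroup.subset_closure (by simp [gens])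
  let E : Subgroup Δ :=
    { carrier := {x | R k * x * R k ∈ C}
      one_mem' := by
        show R k * 1 * R k ∈ C
        rw [mul_one, Rsq]
        exact C.one_mem
      mul_mem' := by
        intro x y hx hy
        show R k * (x * y) * R k ∈ C
        have e : R k * (x * y) * R k = (R k * x * R k) * (R k * y * R k) := by
          simp [mul_assoc]
        rw [e]
        exact C.mul_mem hx hy
      inv_mem' := by
        intro x hx
        show R k * x⁻¹ * R k ∈ C
        have e : R k * x⁻¹ * R k = (R k * x * R k)⁻¹ := by
          simp [mul_assoc, mul_inv_rev]
        rw [e]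
        exact C.inv_mem hx }
  have hE : C ≤ E := by
    rw [hC, Subgroup.closure_le]
    intro s hs
    show R k * s * R k ∈ C
    have hk : k = 0 ∨ R k ∈ C := by
      fin_cases k
      · exact Or.inl rfl
      · exact Or.inr g1
      · exact Or.inr g2
    rcases hk with rfl | hk
    · rcases (mem_gens_iff s).1 hs with rfl | rfl | rfl | rfl
      · have e : R 0 * R 1 * R 0 = (R 0)⁻¹ * R 1 * R 0 := by rw [Rinv]
        rw [e]; exact g3
      · have e : R 0 * R 2 * R 0 = (R 0)⁻¹ * R 2 * R 0 := by rw [Rinv]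
        rw [e]; exact g4
      · have e : R 0 * ((R 0)⁻¹ * R 1 * R 0) * R 0 = R 1 := by simp [mul_assoc, Rsq]
        rw [e]; exact g1
      · have e : R 0 * ((R 0)⁻¹ * R 2 * R 0) * R 0 = R 2 := by simp [mul_assoc, Rsq]
        rw [e]; exact g2
    · exact C.mul_mem (C.mul_mem hk (Subgroup.subset_closure hs)) hk
  exact fun x hx => hE hx

lemma C_normal : (Subgroup.closure gens).Normal := by
  set C := Subgroup.closure gens with hC
  let D : Subgroup Δ :=
    { carrier := {g | ∀ x, x ∈ C ↔ g * x * g⁻¹ ∈ C}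
      one_mem' := by intro x; simp
      mul_mem' := by
        intro g h hg hh x
        have e : g * (h * x * h⁻¹) * g⁻¹ = g * h * x * (g * h)⁻¹ := by
          simp [mul_assoc, mul_inv_rev]
        rw [hh x, hg (h * x * h⁻¹), e]
      inv_mem' := by
        intro g hg x
        have e : g * (g⁻¹ * x * g⁻¹⁻¹) * g⁻¹ = x := by
          simp [mul_assoc]
        have h2 := hg (g⁻¹ * x * g⁻¹⁻¹)
        rw [e] at h2
        exact h2.symm }
  have hD : ∀ g : Δ, g ∈ D := by
    intro g
    apply PresentedGroup.generated_by rels D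
    intro j x
    show x ∈ C ↔ R j * x * (R j)⁻¹ ∈ C
    rw [Rinv]
    constructor
    · exact fun hx => conj_gens j x hx
    · intro hx
      have := conj_gens j _ hx
      have e : R j * (R j * x * R j) * R j = x := by simp [mul_assoc, Rsq]
      rwa [e] at this
  exact ⟨fun x hx g => ((hD g) x).1 hx⟩

lemma D0_le_C : Δ0 ≤ Subgroup.closure gens := by
  haveI := C_normal
  apply Subgroup.normalClosure_le_normal
  intro x hx
  rcases hx with rfl | hx
  · exact Subgroup.subset_closure (by simp [gens])
  · rcases hx with rfl
    exact Subgroup.subset_closure (by simp [gens])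

theorem stmt16 (φ : Δ0 →* Δ) (hφ : Function.Surjective φ)
    (H : Subgroup Δ) (hH : ∃ i : Fin 3, ∃ c : Δ, c⁻¹ * R i * c ∈ H) :
    ∃ s ∈ gens, ∃ c ∈ Δ0, c⁻¹ * s * c ∈ preim φ H := by
  obtain ⟨i, c₀, hc₀⟩ := hH
  by_cases hA : ∃ s, ∃ hs : s ∈ gens, ∃ g : Δ, φ ⟨s, gens_sub s hs⟩ = g⁻¹ * R i * g
  · obtain ⟨s, hs, g, hg⟩ := hA
    obtain ⟨d, hd⟩ := hφ (g⁻¹ * c₀)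
    refine ⟨s, hs, (d : Δ), d.2, ?_⟩
    refine Subgroup.mem_map.2 ⟨d⁻¹ * ⟨s, gens_sub s hs⟩ * d, ?_, rfl⟩
    show φ _ ∈ H
    rw [map_mul, map_mul, map_inv, hd, hg]
    have e : (g⁻¹ * c₀)⁻¹ * (g⁻¹ * R i * g) * (g⁻¹ * c₀) = c₀⁻¹ * R i * c₀ := by
      simp [mul_assoc, mul_inv_rev]
    rw [e]
    exact hc₀
  · exfalso
    push_neg at hA
    have hker : ∀ (s : Δ) (hs : s ∈ gens), chi i (φ ⟨s, gens_sub s hs⟩) = 1 := by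
      intro s hs
      have hsq : φ ⟨s, gens_sub s hs⟩ * φ ⟨s, gens_sub s hs⟩ = 1 := by
        rw [← map_mul]
        have e : (⟨s, gens_sub s hs⟩ : Δ0) * ⟨s, gens_sub s hs⟩ = 1 :=
          Subtype.ext (gens_sq s hs)
        rw [e, map_one]
      rcases classify _ hsq with h1 | ⟨k, g, hk⟩
      · rw [h1, map_one]
      · rw [hk, chi_conj, chi_R]
        have hki : k ≠ i := fun h => hA s hs g (h ▸ hk)
        rw [if_neg hki, ofAdd_zero]
    obtain ⟨d, hd⟩ := hφ (R i)
    have hdC : (d : Δ) ∈ Subgroup.closure gens := D0_le_C d.2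
    have hT : Subgroup.closure gens ≤ ((chi i).comp φ).ker.map Δ0.subtype := by
      rw [Subgroup.closure_le]
      intro s hs
      exact ⟨⟨s, gens_sub s hs⟩, by simpa [MonoidHom.mem_ker] using hker s hs, rfl⟩
    obtain ⟨e, he, hed⟩ := Subgroup.mem_map.1 (hT hdC)
    have hede : e = d := Subtype.ext hed
    subst hede
    rw [MonoidHom.mem_ker, MonoidHom.comp_apply, hd, chi_R, if_pos rfl] at he
    exact absurd he (by decide)
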